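/- Let G be the group with presentation whose generators are x and yᵢ for i ∈ ℕ, and whose relations are x·yᵢ·x = yᵢ·x·yᵢ for every i ∈ ℕ. Then G is not finitely generated. -/

import Mathlib

/-- The relations `x·yᵢ·x = yᵢ·x·yᵢ`, one for each `i : ℕ`, on the generating set
`Option ℕ`, where `none` is the generator `x` and `some i` is the generator `yᵢ`. -/
def wildTrefoilRels : Set (FreeGroup (Option ℕ)) :=
  Set.range fun i : ℕ =>
    FreeGroup.of none * FreeGroup.of (some i) * FreeGroup.of none *
      (FreeGroup.of (some i) * FreeGroup.of none * FreeGroup.of (some i))⁻¹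

open Equiv in
/-- The group `⟨x, y₀, y₁, … | x·yᵢ·x = yᵢ·x·yᵢ (i ∈ ℕ)⟩`, the fundamental group of the
complement of the wild spun trefoil, is not finitely generated. -/
theorem wildTrefoilGroup_not_finitely_generated :
    ¬ Group.FG (PresentedGroup wildTrefoilRels) := by
  intro hFG
  obtain ⟨S, hS, hSfin⟩ := Group.fg_iff.mp hFG
  set Gn : ℕ → Subgroup (PresentedGroup wildTrefoilRels) := fun n =>
    Subgroup.closure ({PresentedGroup.of none} ∪
      ((fun i : ℕ => PresentedGroup.of (some i)) '' Set.Iio n)) with hGn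
  have hmono : Monotone Gn := fun m n hmn => Subgroup.closure_mono
    (Set.union_subset_union_right _ (Set.image_mono (Set.Iio_subset_Iio hmn)))
  have hsup : (⨆ n, Gn n) = ⊤ := by
    rw [eq_top_iff, ← PresentedGroup.closure_range_of wildTrefoilRels]
    refine Subgroup.closure_le _ |>.2 ?_
    rintro _ ⟨o, rfl⟩
    cases o with
    | none => exact Subgroup.mem_iSup_of_mem 0 (Subgroup.subset_closure (Or.inl rfl))
    | some i =>
        exact Subgroup.mem_iSup_of_mem (i + 1) (Subgroup.subset_closure (Or.inr ⟨i, Nat.lt_succ_self i, rfl⟩))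
  have hdir : Directed (· ≤ ·) Gn := hmono.directed_le
  have hmem : ∀ s ∈ S, ∃ n, s ∈ Gn n := by
    intro s hs
    have : s ∈ ⨆ n, Gn n := hsup ▸ Subgroup.mem_top s
    exact (Subgroup.mem_iSup_of_directed hdir).1 this
  choose! ns hns using hmem
  obtain ⟨N, hN⟩ := (hSfin.image ns).bddAbove
  have hGNtop : Gn N = ⊤ := by
    rw [eq_top_iff, ← hS]
    refine Subgroup.closure_le _ |>.2 fun s hs => hmono (hN ⟨s, hs, rfl⟩) (hns s hs)
  -- homomorphism to Perm (Fin 3)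
  set f : Option ℕ → Perm (Fin 3) := fun o =>
    match o with
    | none => swap 0 1
    | some i => if i < N then swap 0 1 else swap 1 2 with hf
  have hrel : ∀ r ∈ wildTrefoilRels, FreeGroup.lift f r = 1 := by
    rintro _ ⟨i, rfl⟩
    simp only [map_mul, map_inv, FreeGroup.lift_apply_of, hf]
    by_cases hi : i < N <;> first | (simp [hi]; decide) | simp [hi]
  set φ := PresentedGroup.toGroup hrel with hφ
  set K : Subgroup (PresentedGroup wildTrefoilRels) :=
    (MulAction.stabilizer (Perm (Fin 3)) (2 : Fin 3)).comap φ with hK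
  have hGK : Gn N ≤ K := by
    refine Subgroup.closure_le _ |>.2 ?_
    rintro _ (rfl | ⟨i, hi, rfl⟩)
    · simp only [SetLike.mem_coe, hK, Subgroup.mem_comap, hφ, PresentedGroup.toGroup.of,
        MulAction.mem_stabilizer_iff, hf]
      decide
    · simp only [Set.mem_Iio] at hi
      simp only [SetLike.mem_coe, hK, Subgroup.mem_comap, hφ, PresentedGroup.toGroup.of,
        MulAction.mem_stabilizer_iff, hf, if_pos hi]
      decide
  have hyN : PresentedGroup.of (some N) ∈ K := hGK (hGNtop ▸ Subgroup.mem_top _)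
  simp only [SetLike.mem_coe, hK, Subgroup.mem_comap, hφ, PresentedGroup.toGroup.of,
    MulAction.mem_stabilizer_iff, hf, lt_irrefl, if_false] at hyN
  exact absurd hyN (by decide)
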